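/- Let F be a nonarchimedean local field with residue cardinality q and ψ an additive character of F with conductor O_F (trivial on O_F, nontrivial on π^{-1}O_F). For a ∈ F^× and real u > 1: ∫_F ψ(ax)·max(1,|x|)^{-u} dx = 0 if |a| > 1, and equals ζ(u)^{-1}·(1 + q^{-(u-1)} + ... + q^{-(u-1)·ord(a)}) if |a| ≤ 1, where ζ(s)=(1-q^{-s})^{-1} and ord(a) is the valuation of a. -/

import Mathlib

open MeasureTheory

/-- The local zeta factor `ζ(s) = (1 - q^{-s})⁻¹`. -/
noncomputable def localZeta (q : ℕ) (s : ℝ) : ℝ := (1 - (q : ℝ) ^ (-s))⁻¹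

open Filter Set ENNReal Topology

namespace PadicAux

variable {p : ℕ} [Fact p.Prime]

/-- Closed ball of radius `p^n`. -/
def Bn (p : ℕ) [Fact p.Prime] (n : ℕ) : Set ℚ_[p] := {x | ‖x‖ ≤ (p : ℝ) ^ n}

lemma hp1 : (1 : ℝ) < p := by
  exact_mod_cast (Fact.out : p.Prime).one_lt

lemma hp0 : (0 : ℝ) < p := lt_trans one_pos hp1

lemma exists_digit (y : ℚ_[p]) (hy : ‖y‖ ≤ 1) :
    ∃ j : ℕ, j < p ∧ ‖y - (j : ℚ_[p])‖ ≤ (p : ℝ)⁻¹ := by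
  set z : ℤ_[p] := ⟨y, hy⟩ with hz
  refine ⟨z.appr 1, by simpa using z.appr_lt 1, ?_⟩
  have h := (PadicInt.norm_le_pow_iff_mem_span_pow (z - ((z.appr 1 : ℕ) : ℤ_[p])) 1).mpr
    (z.appr_spec 1)
  have hnorm : ‖(z - ((z.appr 1 : ℕ) : ℤ_[p]) : ℤ_[p])‖ = ‖y - ((z.appr 1 : ℕ) : ℚ_[p])‖ := by
    rw [PadicInt.norm_def, PadicInt.coe_sub, PadicInt.coe_natCast]
  rw [hnorm] at h
  simpa [zpow_neg] using h

lemma measurableSet_Bn [MeasurableSpace ℚ_[p]] [BorelSpace ℚ_[p]] (n : ℕ) :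
    MeasurableSet (Bn p n) :=
  (isClosed_le continuous_norm continuous_const).measurableSet

lemma natdigit_eq {j j' : ℕ} (hj : j < p) (hj' : j' < p)
    (h : ‖((j : ℚ_[p]) - (j' : ℚ_[p]))‖ ≤ (p : ℝ)⁻¹) : j = j' := by
  have h1 : ‖(((j : ℤ) - j' : ℤ) : ℚ_[p])‖ < 1 := by
    push_cast
    have h2 : (p:ℝ)⁻¹ < 1 := by rw [inv_lt_one_iff₀]; right; exact hp1
    refine lt_of_le_of_lt ?_ h2
    exact_mod_cast h
  have hdvd := (Padic.norm_intCast_lt_one_iff).mp h1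
  have : ((j : ℤ) - j').natAbs < p := by omega
  have := Int.eq_zero_of_dvd_of_natAbs_lt_natAbs hdvd (by omega)
  omega

lemma Bn_succ_eq (n : ℕ) :
    Bn p (n + 1) = ⋃ j ∈ Finset.range p,
      {x : ℚ_[p] | ‖x - (j : ℚ_[p]) * (p : ℚ_[p]) ^ (-(n + 1 : ℤ))‖ ≤ (p : ℝ) ^ n} := by
  ext x
  have hcnorm : ‖((p : ℚ_[p]) ^ (-(n + 1 : ℤ)))‖ = (p : ℝ) ^ (n + 1 : ℤ) := by
    rw [Padic.norm_p_zpow]; ring_nf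
  constructor
  · intro hx
    have hy : ‖x * (p : ℚ_[p]) ^ (n + 1 : ℤ)‖ ≤ 1 := by
      rw [norm_mul, Padic.norm_p_zpow]
      have hxle : ‖x‖ ≤ (p:ℝ)^(n+1:ℕ) := hx
      calc ‖x‖ * (p:ℝ) ^ (-(n+1:ℤ)) ≤ (p:ℝ)^(n+1:ℕ) * (p:ℝ) ^ (-(n+1:ℤ)) :=
            mul_le_mul_of_nonneg_right hxle (le_of_lt (zpow_pos hp0 _))
        _ = 1 := by
            rw [← zpow_natCast (p:ℝ) (n+1), ← zpow_add₀ (ne_of_gt hp0)]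
            have : ((n+1:ℕ):ℤ) + (-(n+1:ℤ)) = 0 := by push_cast; ring
            rw [this, zpow_zero]
    obtain ⟨j, hjp, hj⟩ := exists_digit _ hy
    refine Set.mem_iUnion₂.mpr ⟨j, Finset.mem_range.mpr hjp, ?_⟩
    have : x - (j : ℚ_[p]) * (p : ℚ_[p]) ^ (-(n + 1 : ℤ))
        = (x * (p : ℚ_[p]) ^ (n + 1 : ℤ) - j) * (p : ℚ_[p]) ^ (-(n + 1 : ℤ)) := by
      rw [sub_mul, mul_assoc, ← zpow_add₀ (by exact_mod_cast (Fact.out : p.Prime).ne_zero : (p:ℚ_[p]) ≠ 0)]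
      ring_nf
      simp
    rw [Set.mem_setOf_eq, this, norm_mul, hcnorm]
    calc ‖x * (p : ℚ_[p]) ^ (n + 1 : ℤ) - j‖ * (p:ℝ) ^ (n+1:ℤ)
        ≤ (p:ℝ)⁻¹ * (p:ℝ) ^ (n+1:ℤ) := by
          apply mul_le_mul_of_nonneg_right hj (le_of_lt (zpow_pos hp0 _))
      _ = (p:ℝ) ^ (n:ℕ) := by
          rw [← zpow_neg_one (p:ℝ), ← zpow_add₀ (ne_of_gt hp0), ← zpow_natCast (p:ℝ) n]
          norm_num
  · intro hx
    obtain ⟨j, hjmem, hj⟩ := Set.mem_iUnion₂.mp hx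
    have hjnorm : ‖(j : ℚ_[p]) * (p : ℚ_[p]) ^ (-(n + 1 : ℤ))‖ ≤ (p:ℝ) ^ (n+1:ℕ) := by
      rw [norm_mul, hcnorm]
      calc ‖(j : ℚ_[p])‖ * (p:ℝ) ^ (n+1:ℤ) ≤ 1 * (p:ℝ) ^ (n+1:ℤ) := by
            apply mul_le_mul_of_nonneg_right (Padic.norm_int_le_one (j:ℤ) |>.trans_eq' (by push_cast; rfl)) (le_of_lt (zpow_pos hp0 _))
        _ = (p:ℝ) ^ (n+1:ℕ) := by rw [one_mul, ← zpow_natCast (p:ℝ)]; norm_num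
    have := IsUltrametricDist.norm_add_le_max (x - (j : ℚ_[p]) * (p : ℚ_[p]) ^ (-(n + 1 : ℤ)))
      ((j : ℚ_[p]) * (p : ℚ_[p]) ^ (-(n + 1 : ℤ)))
    rw [sub_add_cancel] at this
    refine le_trans this (max_le (le_trans hj ?_) hjnorm)
    apply pow_le_pow_right₀ (le_of_lt hp1); omega

end PadicAux

namespace PadicAux2
open PadicAux

variable {p : ℕ} [Fact p.Prime]

lemma norm_sub_le_max' (x y : ℚ_[p]) : ‖x - y‖ ≤ max ‖x‖ ‖y‖ := by
  rw [sub_eq_add_neg]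
  simpa using IsUltrametricDist.norm_add_le_max x (-y)

lemma measure_Bn [MeasurableSpace ℚ_[p]] [BorelSpace ℚ_[p]] (μ : Measure ℚ_[p])
    (hinv : ∀ (b : ℚ_[p]) (s : Set ℚ_[p]), μ ((b + ·) ⁻¹' s) = μ s)
    (hone : μ {x : ℚ_[p] | ‖x‖ ≤ 1} = 1) (n : ℕ) :
    μ (Bn p n) = (p : ℝ≥0∞) ^ n := by
  induction n with
  | zero => simpa [Bn] using hone
  | succ n ih =>
    set c : ℚ_[p] := (p : ℚ_[p]) ^ (-(n + 1 : ℤ)) with hc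
    have hcnorm : ‖c‖ = (p : ℝ) ^ (n + 1 : ℤ) := by
      rw [hc, Padic.norm_p_zpow]; ring_nf
    set C : ℕ → Set ℚ_[p] := fun j => {x : ℚ_[p] | ‖x - (j : ℚ_[p]) * c‖ ≤ (p : ℝ) ^ n}
      with hCdef
    have hCpre : ∀ j : ℕ, C j = ((-((j : ℚ_[p]) * c) + ·) ⁻¹' Bn p n) := by
      intro j; ext x
      simp only [hCdef, Set.mem_setOf_eq, Set.mem_preimage, Bn, neg_add_eq_sub]
    have hCmeas : ∀ j : ℕ, MeasurableSet (C j) := by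
      intro j
      exact (isClosed_le (by continuity) continuous_const).measurableSet
    have hμC : ∀ j : ℕ, μ (C j) = (p : ℝ≥0∞) ^ n := by
      intro j; rw [hCpre j, hinv, ih]
    have hdisj : (↑(Finset.range p) : Set ℕ).PairwiseDisjoint C := by
      intro j hj j' hj' hne
      simp only [Finset.coe_range, Set.mem_Iio] at hj hj'
      refine Set.disjoint_left.mpr fun x hx hx' => hne ?_
      have h1 : ‖(j : ℚ_[p]) * c - (j' : ℚ_[p]) * c‖ ≤ (p : ℝ) ^ n := by
        have := norm_sub_le_max' ((j : ℚ_[p]) * c - x) ((j' : ℚ_[p]) * c - x)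
        rw [sub_sub_sub_cancel_right] at this
        refine le_trans this (max_le ?_ ?_)
        · simpa [hCdef, norm_sub_rev] using hx
        · simpa [hCdef, norm_sub_rev] using hx'
      have h2 : ‖(j : ℚ_[p]) - (j' : ℚ_[p])‖ ≤ (p : ℝ)⁻¹ := by
        rw [← sub_mul, norm_mul, hcnorm] at h1
        rw [← le_div_iff₀ (zpow_pos hp0 _)] at h1
        refine le_trans h1 (le_of_eq ?_)
        rw [← zpow_natCast (p:ℝ) n, ← zpow_sub₀ (ne_of_gt hp0)]
        have : (n : ℤ) - (n + 1 : ℤ) = -1 := by ring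
        rw [this, zpow_neg_one]
      exact natdigit_eq hj hj' h2
    rw [Bn_succ_eq, measure_biUnion_finset hdisj (fun j _ => hCmeas j)]
    simp only [hμC, Finset.sum_const, Finset.card_range, nsmul_eq_mul]
    rw [pow_succ]; ring

lemma psi_continuous (ψ : AddChar ℚ_[p] ℂ) (hψ_triv : ∀ x : ℚ_[p], ‖x‖ ≤ 1 → ψ x = 1) :
    Continuous ψ := by
  refine IsLocallyConstant.continuous (fun s => ?_)
  rw [Metric.isOpen_iff]
  intro x hx
  refine ⟨1, one_pos, fun y hy => ?_⟩
  have : ψ y = ψ x := by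
    have h1 : ψ (y - x) = 1 := hψ_triv _ (by
      rw [Metric.mem_ball, dist_eq_norm] at hy; exact hy.le)
    calc ψ y = ψ (x + (y - x)) := by ring_nf
      _ = ψ x * ψ (y - x) := ψ.map_add_eq_mul _ _
      _ = ψ x := by rw [h1, mul_one]
  simpa [Set.mem_preimage, this] using hx

lemma psi_norm_one (ψ : AddChar ℚ_[p] ℂ) (hψ_triv : ∀ x : ℚ_[p], ‖x‖ ≤ 1 → ψ x = 1)
    (x : ℚ_[p]) : ‖ψ x‖ = 1 := by
  obtain ⟨n, hn⟩ := pow_unbounded_of_one_lt ‖x‖ (hp1 (p := p))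
  have h1 : ψ ((p ^ n : ℕ) • x) = 1 := by
    apply hψ_triv
    have : ‖((p ^ n : ℕ) : ℚ_[p]) * x‖ = (p : ℝ) ^ (-(n:ℤ)) * ‖x‖ := by
      rw [norm_mul]
      congr 1
      rw [Nat.cast_pow, ← Padic.norm_p_zpow, zpow_natCast]
    rw [nsmul_eq_mul, this]
    rw [zpow_neg, inv_mul_le_one₀ (zpow_pos hp0 _), zpow_natCast]
    exact hn.le
  rw [ψ.map_nsmul_eq_pow] at h1
  have h2 : ‖ψ x‖ ^ (p ^ n) = 1 := by
    rw [← norm_pow, h1, norm_one]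
  have hpn : p ^ n ≠ 0 := pow_ne_zero _ (Fact.out : p.Prime).ne_zero
  rcases lt_trichotomy ‖ψ x‖ 1 with h | h | h
  · exact absurd h2 (ne_of_lt (pow_lt_one₀ (norm_nonneg _) h hpn))
  · exact h
  · exact absurd h2.symm (ne_of_lt (one_lt_pow₀ h hpn))

variable [MeasurableSpace ℚ_[p]] [BorelSpace ℚ_[p]]

lemma map_add_eq (μ : Measure ℚ_[p])
    (hinv : ∀ (b : ℚ_[p]) (s : Set ℚ_[p]), μ ((b + ·) ⁻¹' s) = μ s) (b : ℚ_[p]) :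
    μ.map (b + ·) = μ :=
  Measure.ext fun s hs => by
    rw [Measure.map_apply (measurable_const_add b) hs]; exact hinv b s

lemma isFiniteMeasure_restrict_Bn (μ : Measure ℚ_[p])
    (hinv : ∀ (b : ℚ_[p]) (s : Set ℚ_[p]), μ ((b + ·) ⁻¹' s) = μ s)
    (hone : μ {x : ℚ_[p] | ‖x‖ ≤ 1} = 1) (n : ℕ) :
    IsFiniteMeasure (μ.restrict (Bn p n)) := by
  constructor
  rw [Measure.restrict_apply_univ, measure_Bn μ hinv hone]
  exact ENNReal.pow_lt_top (by simp)

lemma integrableOn_Bn_of_bounded (μ : Measure ℚ_[p])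
    (hinv : ∀ (b : ℚ_[p]) (s : Set ℚ_[p]), μ ((b + ·) ⁻¹' s) = μ s)
    (hone : μ {x : ℚ_[p] | ‖x‖ ≤ 1} = 1) (n : ℕ) {g : ℚ_[p] → ℂ} {C : ℝ}
    (hg : Continuous g) (hb : ∀ x, ‖g x‖ ≤ C) :
    IntegrableOn g (Bn p n) μ := by
  have := isFiniteMeasure_restrict_Bn μ hinv hone n
  exact ⟨hg.aestronglyMeasurable.restrict,
    HasFiniteIntegral.of_bounded (C := C) (Eventually.of_forall hb)⟩

variable {μ : Measure ℚ_[p]} {ψ : AddChar ℚ_[p] ℂ} {a : ℚ_[p]}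

lemma int_char_triv
    (hinv : ∀ (b : ℚ_[p]) (s : Set ℚ_[p]), μ ((b + ·) ⁻¹' s) = μ s)
    (hone : μ {x : ℚ_[p] | ‖x‖ ≤ 1} = 1)
    (hψ_triv : ∀ x : ℚ_[p], ‖x‖ ≤ 1 → ψ x = 1)
    (n : ℕ) (h : ‖a‖ * (p : ℝ) ^ n ≤ 1) :
    ∫ x in Bn p n, ψ (a * x) ∂μ = ((p : ℝ) ^ n : ℝ) := by
  rw [setIntegral_congr_fun (measurableSet_Bn n) (g := fun _ => (1 : ℂ)) ?_]
  · rw [setIntegral_const, measureReal_def, measure_Bn μ hinv hone]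
    simp [ENNReal.toReal_pow]
  · intro x hx
    apply hψ_triv
    rw [norm_mul]
    calc ‖a‖ * ‖x‖ ≤ ‖a‖ * (p : ℝ) ^ n := by
          exact mul_le_mul_of_nonneg_left hx (norm_nonneg a)
      _ ≤ 1 := h

lemma int_char_zero
    (hinv : ∀ (b : ℚ_[p]) (s : Set ℚ_[p]), μ ((b + ·) ⁻¹' s) = μ s)
    (hψ_triv : ∀ x : ℚ_[p], ‖x‖ ≤ 1 → ψ x = 1)
    (hψ_nontriv : ∃ x : ℚ_[p], ‖x‖ ≤ p ∧ ψ x ≠ 1)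
    (ha : a ≠ 0) (n : ℕ) (h : 1 < ‖a‖ * (p : ℝ) ^ n) :
    ∫ x in Bn p n, ψ (a * x) ∂μ = 0 := by
  obtain ⟨x₁, hx₁p, hx₁⟩ := hψ_nontriv
  set x₀ := x₁ / a with hx₀
  have hax₀ : a * x₀ = x₁ := by rw [hx₀]; field_simp
  have hv := Padic.norm_eq_zpow_neg_valuation ha
  have hexp : 1 ≤ (n : ℤ) - a.valuation := by
    by_contra hc
    push_neg at hc
    have h1 : (p : ℝ) ^ ((n : ℤ) - a.valuation) ≤ 1 :=
      zpow_le_one_of_nonpos₀ (le_of_lt hp1) (by omega)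
    have h2 : ‖a‖ * (p : ℝ) ^ n = (p : ℝ) ^ ((n : ℤ) - a.valuation) := by
      rw [hv, ← zpow_natCast (p : ℝ) n, ← zpow_add₀ (ne_of_gt hp0)]
      congr 1; ring
    rw [h2] at h
    linarith
  have hx₀norm : ‖x₀‖ ≤ (p : ℝ) ^ n := by
    rw [hx₀, norm_div, div_le_iff₀ (norm_pos_iff.mpr ha)]
    calc ‖x₁‖ ≤ (p : ℝ) := hx₁p
      _ = (p : ℝ) ^ (1 : ℤ) := (zpow_one _).symm
      _ ≤ (p : ℝ) ^ ((n : ℤ) - a.valuation) := zpow_le_zpow_right₀ (le_of_lt hp1) hexp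
      _ = (p : ℝ) ^ n * ‖a‖ := by
          rw [hv, ← zpow_natCast (p : ℝ) n, ← zpow_add₀ (ne_of_gt hp0)]
          congr 1
  have hpre : (x₀ + ·) ⁻¹' (Bn p n) = Bn p n := by
    ext x
    simp only [Set.mem_preimage, Bn, Set.mem_setOf_eq]
    constructor
    · intro hx
      have hxeq : x = (x₀ + x) - x₀ := by ring
      rw [hxeq]
      exact le_trans (norm_sub_le_max' _ _) (max_le hx hx₀norm)
    · intro hx
      exact le_trans (IsUltrametricDist.norm_add_le_max _ _) (max_le hx₀norm hx)
  have hcont : Continuous fun x : ℚ_[p] => ψ (a * x) :=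
    (psi_continuous ψ hψ_triv).comp (continuous_const.mul continuous_id)
  have key : ∫ x in Bn p n, ψ (a * x) ∂μ
      = ψ (a * x₀) * ∫ x in Bn p n, ψ (a * x) ∂μ := by
    conv_lhs => rw [← map_add_eq μ hinv x₀]
    rw [setIntegral_map (measurableSet_Bn n) ?_ (measurable_const_add x₀).aemeasurable]
    · rw [hpre]
      have hmul : ∀ x : ℚ_[p], ψ (a * (x₀ + x)) = ψ (a * x₀) * ψ (a * x) := fun x => by
        rw [mul_add, ψ.map_add_eq_mul]
      simp_rw [hmul]
      rw [MeasureTheory.integral_const_mul]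
    · rw [map_add_eq μ hinv x₀]
      exact hcont.aestronglyMeasurable
  have hne : ψ (a * x₀) ≠ 1 := by rw [hax₀]; exact hx₁
  have h0 : (1 - ψ (a * x₀)) * ∫ x in Bn p n, ψ (a * x) ∂μ = 0 := by
    linear_combination key
  rcases mul_eq_zero.mp h0 with h1 | h1
  · exact absurd (by linear_combination -h1 : ψ (a * x₀) = 1) hne
  · exact h1

lemma mono_Bn : Monotone (Bn p) := fun n m hnm x hx =>
  le_trans hx (pow_le_pow_right₀ (le_of_lt (hp1 (p := p))) hnm)

lemma iUnion_Bn : ⋃ n, Bn p n = Set.univ := by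
  refine Set.eq_univ_of_forall fun x => Set.mem_iUnion.mpr ?_
  obtain ⟨n, hn⟩ := pow_unbounded_of_one_lt ‖x‖ (hp1 (p := p))
  exact ⟨n, hn.le⟩

lemma shell_norm {n : ℕ} {x : ℚ_[p]} (hx : x ∈ Bn p (n + 1) \ Bn p n) :
    ‖x‖ = (p : ℝ) ^ (n + 1) := by
  obtain ⟨hx1, hx2⟩ := hx
  simp only [Bn, Set.mem_setOf_eq, not_le] at hx1 hx2
  have hx0 : x ≠ 0 := by
    intro h
    rw [h, norm_zero] at hx2
    exact absurd hx2 (not_lt.mpr (by positivity))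
  rw [Padic.norm_eq_zpow_neg_valuation hx0] at hx1 hx2 ⊢
  rw [← zpow_natCast (p : ℝ) (n + 1)] at hx1 ⊢
  rw [← zpow_natCast (p : ℝ) n] at hx2
  have h1 : -x.valuation ≤ (n + 1 : ℕ) := by
    rw [← zpow_le_zpow_iff_right₀ (hp1 (p := p))]; exact hx1
  have h2 : (n : ℤ) < -x.valuation := by
    rw [← zpow_lt_zpow_iff_right₀ (hp1 (p := p))]; exact hx2
  congr 1
  omega

variable {u : ℝ}

lemma f_norm (hψ_triv : ∀ x : ℚ_[p], ‖x‖ ≤ 1 → ψ x = 1) (x : ℚ_[p]) :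
    ‖ψ (a * x) * (((max 1 ‖x‖ : ℝ) ^ (-u) : ℝ) : ℂ)‖ = (max 1 ‖x‖ : ℝ) ^ (-u) := by
  rw [norm_mul, psi_norm_one ψ hψ_triv, one_mul, Complex.norm_real, Real.norm_eq_abs,
    abs_of_nonneg (Real.rpow_nonneg (le_trans zero_le_one (le_max_left _ _)) _)]

lemma f_cont (hψ_triv : ∀ x : ℚ_[p], ‖x‖ ≤ 1 → ψ x = 1) :
    Continuous fun x : ℚ_[p] => ψ (a * x) * (((max 1 ‖x‖ : ℝ) ^ (-u) : ℝ) : ℂ) := by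
  apply Continuous.mul
  · exact (psi_continuous ψ hψ_triv).comp (continuous_const.mul continuous_id)
  · apply Complex.continuous_ofReal.comp
    apply Continuous.rpow_const (continuous_const.max continuous_norm)
    intro x
    left
    exact ne_of_gt (lt_of_lt_of_le zero_lt_one (le_max_left _ _))

lemma f_integrable
    (hinv : ∀ (b : ℚ_[p]) (s : Set ℚ_[p]), μ ((b + ·) ⁻¹' s) = μ s)
    (hone : μ {x : ℚ_[p] | ‖x‖ ≤ 1} = 1)
    (hψ_triv : ∀ x : ℚ_[p], ‖x‖ ≤ 1 → ψ x = 1) (hu : 1 < u) :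
    Integrable (fun x : ℚ_[p] => ψ (a * x) * (((max 1 ‖x‖ : ℝ) ^ (-u) : ℝ) : ℂ)) μ := by
  set f := fun x : ℚ_[p] => ψ (a * x) * (((max 1 ‖x‖ : ℝ) ^ (-u) : ℝ) : ℂ) with hf
  refine ⟨(f_cont hψ_triv).aestronglyMeasurable, ?_⟩
  rw [MeasureTheory.hasFiniteIntegral_iff_norm]
  set S := disjointed (Bn p) with hS
  have hSmeas : ∀ n, MeasurableSet (S n) :=
    MeasurableSet.disjointed (fun n => measurableSet_Bn n)
  have hcover : (⋃ n, S n) = Set.univ := by rw [hS, iUnion_disjointed, iUnion_Bn]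
  set r : ℝ≥0∞ := ENNReal.ofReal ((p : ℝ) ^ ((1 : ℝ) - u)) with hr
  have hbound : ∀ n, ∫⁻ x in S n, ENNReal.ofReal ‖f x‖ ∂μ ≤ r ^ n := by
    intro n
    have hSsub : S n ⊆ Bn p n := disjointed_le (Bn p) n
    have hμS : μ (S n) ≤ (p : ℝ≥0∞) ^ n := by
      rw [← measure_Bn μ hinv hone n]
      exact measure_mono hSsub
    cases n with
    | zero =>
      calc ∫⁻ x in S 0, ENNReal.ofReal ‖f x‖ ∂μ
          ≤ ∫⁻ _ in S 0, 1 ∂μ := by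
            refine setLIntegral_mono measurable_const fun x hx => ?_
            rw [hf]
            simp only []
            rw [f_norm hψ_triv]
            rw [show ((1:ℝ≥0∞)) = ENNReal.ofReal 1 by simp]
            apply ENNReal.ofReal_le_ofReal
            exact Real.rpow_le_one_of_one_le_of_nonpos (le_max_left _ _) (by linarith)
        _ = μ (S 0) := by rw [setLIntegral_const, one_mul]
        _ ≤ 1 := by simpa using hμS
        _ = r ^ 0 := by rw [pow_zero]
    | succ n =>
      have hnormS : ∀ x ∈ S (n + 1), ‖f x‖ = ((p : ℝ) ^ (n + 1)) ^ (-u) := by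
        intro x hx
        have hx' : x ∈ Bn p (n + 1) \ Bn p n := by
          rw [hS, ← Order.succ_eq_add_one, (mono_Bn (p := p)).disjointed_succ (not_isMax n), Order.succ_eq_add_one] at hx; exact hx
        rw [hf]
        simp only []
        rw [f_norm hψ_triv, max_eq_right, shell_norm hx']
        rw [shell_norm hx']
        exact le_trans (le_of_lt (hp1 (p := p))) (le_self_pow₀ (le_of_lt (hp1 (p := p))) (by omega))
      calc ∫⁻ x in S (n + 1), ENNReal.ofReal ‖f x‖ ∂μ
          ≤ ∫⁻ _ in S (n + 1), ENNReal.ofReal (((p : ℝ) ^ (n + 1)) ^ (-u)) ∂μ := by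
            refine setLIntegral_mono measurable_const fun x hx => ?_
            rw [hnormS x hx]
        _ = ENNReal.ofReal (((p : ℝ) ^ (n + 1)) ^ (-u)) * μ (S (n + 1)) := setLIntegral_const _ _
        _ ≤ ENNReal.ofReal (((p : ℝ) ^ (n + 1)) ^ (-u)) * (p : ℝ≥0∞) ^ (n + 1) := by
            exact mul_le_mul_right hμS _
        _ = r ^ (n + 1) := by
            rw [hr, show ((p : ℝ≥0∞)) = ENNReal.ofReal (p : ℝ) by simp,
              ← ENNReal.ofReal_pow (by positivity), ← ENNReal.ofReal_mul (by positivity),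
              ← ENNReal.ofReal_pow (by positivity)]
            congr 1
            rw [← Real.rpow_natCast ((p : ℝ) ^ ((1:ℝ) - u)) (n + 1),
              ← Real.rpow_mul (le_of_lt (hp0 (p := p))),
              ← Real.rpow_natCast (p : ℝ) (n + 1),
              ← Real.rpow_mul (le_of_lt (hp0 (p := p))),
              ← Real.rpow_add (hp0 (p := p))]
            congr 1
            push_cast
            ring
  calc ∫⁻ x, ENNReal.ofReal ‖f x‖ ∂μ
      = ∫⁻ x in ⋃ n, S n, ENNReal.ofReal ‖f x‖ ∂μ := by rw [hcover, Measure.restrict_univ]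
    _ = ∑' n, ∫⁻ x in S n, ENNReal.ofReal ‖f x‖ ∂μ := by
        exact lintegral_iUnion hSmeas (disjoint_disjointed _) _
    _ ≤ ∑' n, r ^ n := ENNReal.tsum_le_tsum hbound
    _ = (1 - r)⁻¹ := ENNReal.tsum_geometric r
    _ < ⊤ := by
        rw [ENNReal.inv_lt_top]
        rw [hr]
        have hrlt : (p : ℝ) ^ ((1 : ℝ) - u) < 1 :=
          Real.rpow_lt_one_of_one_lt_of_neg (hp1 (p := p)) (by linarith)
        have h1 : ENNReal.ofReal ((p : ℝ) ^ ((1 : ℝ) - u)) < 1 := by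
          rw [← ENNReal.ofReal_one]
          exact (ENNReal.ofReal_lt_ofReal_iff one_pos).mpr hrlt
        exact tsub_pos_of_lt h1

lemma rpow_id1 (hu : 1 < u) (n : ℕ) :
    ((p : ℝ) ^ (n : ℕ)) ^ (-u) * (p : ℝ) ^ (n : ℕ) = ((p : ℝ) ^ ((1 : ℝ) - u)) ^ (n : ℕ) := by
  rw [← Real.rpow_natCast ((p : ℝ) ^ ((1:ℝ) - u)) n,
    ← Real.rpow_mul (le_of_lt (hp0 (p := p))),
    ← Real.rpow_natCast (p : ℝ) n,
    ← Real.rpow_mul (le_of_lt (hp0 (p := p))),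
    ← Real.rpow_add (hp0 (p := p))]
  congr 1
  ring

lemma char_integrableOn
    (hinv : ∀ (b : ℚ_[p]) (s : Set ℚ_[p]), μ ((b + ·) ⁻¹' s) = μ s)
    (hone : μ {x : ℚ_[p] | ‖x‖ ≤ 1} = 1)
    (hψ_triv : ∀ x : ℚ_[p], ‖x‖ ≤ 1 → ψ x = 1) (n : ℕ) :
    IntegrableOn (fun x => ψ (a * x)) (Bn p n) μ := by
  refine integrableOn_Bn_of_bounded μ hinv hone n
    ((psi_continuous ψ hψ_triv).comp (continuous_const.mul continuous_id)) (C := 1)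
    (fun x => le_of_eq (psi_norm_one ψ hψ_triv _))

lemma J_succ
    (hinv : ∀ (b : ℚ_[p]) (s : Set ℚ_[p]), μ ((b + ·) ⁻¹' s) = μ s)
    (hone : μ {x : ℚ_[p] | ‖x‖ ≤ 1} = 1)
    (hψ_triv : ∀ x : ℚ_[p], ‖x‖ ≤ 1 → ψ x = 1) (hu : 1 < u) (N : ℕ) :
    ∫ x in Bn p (N + 1), ψ (a * x) * (((max 1 ‖x‖ : ℝ) ^ (-u) : ℝ) : ℂ) ∂μ
      = (∫ x in Bn p N, ψ (a * x) * (((max 1 ‖x‖ : ℝ) ^ (-u) : ℝ) : ℂ) ∂μ)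
        + ((((p : ℝ) ^ (N + 1 : ℕ)) ^ (-u) : ℝ) : ℂ) *
          ((∫ x in Bn p (N + 1), ψ (a * x) ∂μ) - ∫ x in Bn p N, ψ (a * x) ∂μ) := by
  have hfint := f_integrable (a := a) (ψ := ψ) (μ := μ) hinv hone hψ_triv hu
  have hχint := char_integrableOn (a := a) (ψ := ψ) (μ := μ) hinv hone hψ_triv
  have hsub : Bn p N ⊆ Bn p (N + 1) := mono_Bn (Nat.le_succ N)
  have hdiffmeas : MeasurableSet (Bn p (N + 1) \ Bn p N) :=
    (measurableSet_Bn _).diff (measurableSet_Bn _)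
  have hsplit : Bn p N ∪ (Bn p (N + 1) \ Bn p N) = Bn p (N + 1) := Set.union_diff_cancel hsub
  have hdisj : Disjoint (Bn p N) (Bn p (N + 1) \ Bn p N) := Set.disjoint_sdiff_right
  have hχsplit : (∫ x in Bn p (N + 1), ψ (a * x) ∂μ)
      = (∫ x in Bn p N, ψ (a * x) ∂μ) + ∫ x in Bn p (N + 1) \ Bn p N, ψ (a * x) ∂μ := by
    conv_lhs => rw [← hsplit]
    rw [setIntegral_union hdisj hdiffmeas (hχint N)
      ((hχint (N + 1)).mono_set Set.diff_subset)]
  have hfsplit : (∫ x in Bn p (N + 1), ψ (a * x) * (((max 1 ‖x‖ : ℝ) ^ (-u) : ℝ) : ℂ) ∂μ)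
      = (∫ x in Bn p N, ψ (a * x) * (((max 1 ‖x‖ : ℝ) ^ (-u) : ℝ) : ℂ) ∂μ)
        + ∫ x in Bn p (N + 1) \ Bn p N, ψ (a * x) * (((max 1 ‖x‖ : ℝ) ^ (-u) : ℝ) : ℂ) ∂μ := by
    conv_lhs => rw [← hsplit]
    rw [setIntegral_union hdisj hdiffmeas hfint.integrableOn hfint.integrableOn]
  have hdiffcongr : ∫ x in Bn p (N + 1) \ Bn p N, ψ (a * x) * (((max 1 ‖x‖ : ℝ) ^ (-u) : ℝ) : ℂ) ∂μ
      = ((((p : ℝ) ^ (N + 1 : ℕ)) ^ (-u) : ℝ) : ℂ) *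
          ∫ x in Bn p (N + 1) \ Bn p N, ψ (a * x) ∂μ := by
    rw [setIntegral_congr_fun hdiffmeas
      (g := fun x => ((((p : ℝ) ^ (N + 1 : ℕ)) ^ (-u) : ℝ) : ℂ) * ψ (a * x)) ?_,
      MeasureTheory.integral_const_mul]
    refine fun x hx => ?_
    have hsn := shell_norm hx
    have h1le : (1 : ℝ) ≤ ‖x‖ := by
      rw [hsn]
      exact one_le_pow₀ (le_of_lt (hp1 (p := p)))
    have hmax : (max 1 ‖x‖ : ℝ) = (p : ℝ) ^ (N + 1 : ℕ) := by rw [max_eq_right h1le, hsn]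
    simp only [hmax]
    ring
  rw [hfsplit, hdiffcongr, hχsplit]
  ring

lemma geom_algebra (T c : ℝ) (M : ℕ) :
    1 + (∑ n ∈ Finset.Icc 1 M, (T ^ n - T ^ n * c)) - T ^ (M + 1) * c
      = (1 - T * c) * ∑ n ∈ Finset.range (M + 1), T ^ n := by
  induction M with
  | zero =>
    simp
  | succ M ih =>
    rw [Finset.sum_Icc_succ_top (by omega : 1 ≤ M + 1), Finset.sum_range_succ]
    linear_combination ih

end PadicAux2

open PadicAux PadicAux2 Filter Topology in
theorem padic_integral_char_max' (p : ℕ) [Fact p.Prime]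
    [MeasurableSpace ℚ_[p]] [BorelSpace ℚ_[p]]
    (μ : Measure ℚ_[p])
    (hinv : ∀ (b : ℚ_[p]) (s : Set ℚ_[p]), μ ((b + ·) ⁻¹' s) = μ s)
    (hone : μ {x : ℚ_[p] | ‖x‖ ≤ 1} = 1)
    (ψ : AddChar ℚ_[p] ℂ)
    (hψ_triv : ∀ x : ℚ_[p], ‖x‖ ≤ 1 → ψ x = 1)
    (hψ_nontriv : ∃ x : ℚ_[p], ‖x‖ ≤ p ∧ ψ x ≠ 1)
    (a : ℚ_[p]) (ha : a ≠ 0) (u : ℝ) (hu : 1 < u) :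
    (1 < ‖a‖ → ∫ x : ℚ_[p], ψ (a * x) * ((max 1 ‖x‖ : ℝ) ^ (-u) : ℝ) ∂μ = 0) ∧
    (‖a‖ ≤ 1 → ∫ x : ℚ_[p], ψ (a * x) * ((max 1 ‖x‖ : ℝ) ^ (-u) : ℝ) ∂μ
      = ((1 - (p:ℝ) ^ (-u) : ℝ)) *
        ∑ k ∈ Finset.range (a.valuation.toNat + 1), (((p : ℝ) ^ (-(u - 1) * k) : ℝ) : ℂ) ) := by
  have hp1' : (1 : ℝ) < p := hp1
  have hp0' : (0 : ℝ) < p := hp0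
  have hfint := f_integrable (a := a) (ψ := ψ) (μ := μ) hinv hone hψ_triv hu
  have hlim : Tendsto (fun N : ℕ => ∫ x in Bn p N, ψ (a * x) * (((max 1 ‖x‖ : ℝ) ^ (-u) : ℝ) : ℂ) ∂μ)
      atTop (𝓝 (∫ x : ℚ_[p], ψ (a * x) * (((max 1 ‖x‖ : ℝ) ^ (-u) : ℝ) : ℂ) ∂μ)) := by
    have h := tendsto_setIntegral_of_monotone (μ := μ)
      (f := fun x : ℚ_[p] => ψ (a * x) * (((max 1 ‖x‖ : ℝ) ^ (-u) : ℝ) : ℂ))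
      (fun n => measurableSet_Bn n) mono_Bn (by rw [iUnion_Bn]; exact hfint.integrableOn)
    rw [iUnion_Bn, Measure.restrict_univ] at h
    exact h
  have hJ0 : (∫ x in Bn p 0, ψ (a * x) * (((max 1 ‖x‖ : ℝ) ^ (-u) : ℝ) : ℂ) ∂μ)
      = ∫ x in Bn p 0, ψ (a * x) ∂μ := by
    refine setIntegral_congr_fun (measurableSet_Bn 0) fun x hx => ?_
    have hx1 : ‖x‖ ≤ 1 := by simpa [Bn] using hx
    have hmax : (max 1 ‖x‖ : ℝ) = 1 := max_eq_left hx1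
    simp [hmax]
  have hJsucc := J_succ (a := a) (ψ := ψ) (μ := μ) hinv hone hψ_triv hu
  constructor
  · intro hagt
    have hIz : ∀ N : ℕ, (∫ x in Bn p N, ψ (a * x) ∂μ) = 0 := fun N =>
      int_char_zero hinv hψ_triv hψ_nontriv ha N
        (lt_of_lt_of_le hagt (le_mul_of_one_le_right (norm_nonneg a) (one_le_pow₀ hp1'.le)))
    have hJz : ∀ N : ℕ, (∫ x in Bn p N, ψ (a * x) * (((max 1 ‖x‖ : ℝ) ^ (-u) : ℝ) : ℂ) ∂μ) = 0 := by
      intro N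
      induction N with
      | zero => rw [hJ0, hIz]
      | succ N ih => rw [hJsucc N, ih, hIz, hIz]; ring
    simp only [hJz] at hlim
    exact (tendsto_nhds_unique hlim tendsto_const_nhds)
  · intro hale
    set M := a.valuation.toNat with hMdef
    have hvalM : a.valuation = (M : ℤ) :=
      (Int.toNat_of_nonneg ((Padic.norm_le_one_iff_val_nonneg a).mp hale)).symm
    have hanorm : ‖a‖ = (p : ℝ) ^ (-(M : ℤ)) := by rw [Padic.norm_eq_zpow_neg_valuation ha, hvalM]
    have hItriv : ∀ n : ℕ, n ≤ M → (∫ x in Bn p n, ψ (a * x) ∂μ) = (((p : ℝ) ^ (n : ℕ) : ℝ) : ℂ) := by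
      intro n hn
      refine int_char_triv hinv hone hψ_triv n ?_
      rw [hanorm, ← zpow_natCast (p : ℝ) n, ← zpow_add₀ (ne_of_gt hp0')]
      exact zpow_le_one_of_nonpos₀ hp1'.le (by omega)
    have hIzero : ∀ n : ℕ, M < n → (∫ x in Bn p n, ψ (a * x) ∂μ) = 0 := by
      intro n hn
      refine int_char_zero hinv hψ_triv hψ_nontriv ha n ?_
      rw [hanorm, ← zpow_natCast (p : ℝ) n, ← zpow_add₀ (ne_of_gt hp0')]
      calc (1 : ℝ) = (p : ℝ) ^ (0 : ℤ) := by simp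
        _ < (p : ℝ) ^ (-(M : ℤ) + (n : ℤ)) := zpow_lt_zpow_right₀ hp1' (by omega)
    set T : ℝ := (p : ℝ) ^ ((1 : ℝ) - u) with hTdef
    have hclaim1 : ∀ N : ℕ, N ≤ M →
        (∫ x in Bn p N, ψ (a * x) * (((max 1 ‖x‖ : ℝ) ^ (-u) : ℝ) : ℂ) ∂μ)
          = ((1 + ∑ n ∈ Finset.Icc 1 N, (T ^ n - T ^ n * (p : ℝ)⁻¹) : ℝ) : ℂ) := by
      intro N
      induction N with
      | zero =>
        intro _
        rw [hJ0, hItriv 0 (Nat.zero_le M)]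
        simp
      | succ N ih =>
        intro hNM
        rw [hJsucc N, ih (by omega), hItriv (N + 1) hNM, hItriv N (by omega),
          Finset.sum_Icc_succ_top (by omega : 1 ≤ N + 1),
          ← Complex.ofReal_sub, ← Complex.ofReal_mul, ← Complex.ofReal_add]
        congr 1
        have hkey := rpow_id1 (p := p) hu (N + 1)
        have hPP : (p : ℝ) ^ N = (p : ℝ) ^ (N + 1) * (p : ℝ)⁻¹ := by
          rw [pow_succ, mul_assoc, mul_inv_cancel₀ (ne_of_gt hp0'), mul_one]
        linear_combination hkey - (p : ℝ)⁻¹ * hkey - ((p : ℝ) ^ (N + 1 : ℕ)) ^ (-u) * hPP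
    set Ctot : ℝ := 1 + (∑ n ∈ Finset.Icc 1 M, (T ^ n - T ^ n * (p : ℝ)⁻¹))
      - T ^ (M + 1) * (p : ℝ)⁻¹ with hCt
    have hJM1 : (∫ x in Bn p (M + 1), ψ (a * x) * (((max 1 ‖x‖ : ℝ) ^ (-u) : ℝ) : ℂ) ∂μ)
        = (Ctot : ℂ) := by
      rw [hJsucc M, hclaim1 M le_rfl, hIzero (M + 1) (by omega), hItriv M le_rfl, zero_sub, hCt]
      have hkey := rpow_id1 (p := p) hu (M + 1)
      have hPP : (p : ℝ) ^ M = (p : ℝ) ^ (M + 1) * (p : ℝ)⁻¹ := by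
        rw [pow_succ, mul_assoc, mul_inv_cancel₀ (ne_of_gt hp0'), mul_one]
      rw [mul_neg, ← Complex.ofReal_mul, ← sub_eq_add_neg, ← Complex.ofReal_sub]
      congr 1
      linear_combination (-(p : ℝ)⁻¹) * hkey - ((p : ℝ) ^ (M + 1 : ℕ)) ^ (-u) * hPP
    have hconst : ∀ k : ℕ,
        (∫ x in Bn p (k + (M + 1)), ψ (a * x) * (((max 1 ‖x‖ : ℝ) ^ (-u) : ℝ) : ℂ) ∂μ)
          = (Ctot : ℂ) := by
      intro k
      induction k with
      | zero => simpa using hJM1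
      | succ k ih =>
        have hkk : k + 1 + (M + 1) = (k + (M + 1)) + 1 := by omega
        rw [hkk, hJsucc (k + (M + 1)), ih, hIzero ((k + (M + 1)) + 1) (by omega),
          hIzero (k + (M + 1)) (by omega)]
        ring
    have hlim2 := hlim.comp (tendsto_add_atTop_nat (M + 1))
    simp only [Function.comp_def, hconst] at hlim2
    have hfin : (∫ x : ℚ_[p], ψ (a * x) * (((max 1 ‖x‖ : ℝ) ^ (-u) : ℝ) : ℂ) ∂μ) = (Ctot : ℂ) :=
      tendsto_nhds_unique hlim2 tendsto_const_nhds
    rw [hfin]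
    have hTc : T * (p : ℝ)⁻¹ = (p : ℝ) ^ (-u) := by
      rw [hTdef, ← Real.rpow_neg_one (p : ℝ), ← Real.rpow_add hp0']
      congr 1
      ring
    have hterm : ∀ k : ℕ, ((p : ℝ) ^ (-(u - 1) * (k : ℕ)) : ℝ) = T ^ (k : ℕ) := by
      intro k
      rw [hTdef, ← Real.rpow_natCast ((p : ℝ) ^ ((1 : ℝ) - u)) k, ← Real.rpow_mul hp0'.le]
      congr 1
      ring
    have htr : Ctot = (1 - (p : ℝ) ^ (-u)) * ∑ k ∈ Finset.range (M + 1), T ^ k := by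
      rw [hCt, ← hTc]
      exact geom_algebra T (p : ℝ)⁻¹ M
    simp only [hterm]
    rw [htr]
    push_cast
    ring


/-- For `F = ℚ_p` with Haar measure giving `O_F` measure 1 and `ψ` an additive character with
conductor `O_F`: for `a ∈ F^×` and real `u > 1`, the integral `∫ ψ(ax) max(1,|x|)^{-u} dx`
vanishes when `|a| > 1`, and equals `ζ(u)⁻¹ (1 + q^{-(u-1)} + ⋯ + q^{-(u-1)·ord(a)})`
when `|a| ≤ 1`. -/
theorem padic_integral_char_max (p : ℕ) [Fact p.Prime]
    [MeasurableSpace ℚ_[p]] [BorelSpace ℚ_[p]]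
    (μ : Measure ℚ_[p])
    (hinv : ∀ (b : ℚ_[p]) (s : Set ℚ_[p]), μ ((b + ·) ⁻¹' s) = μ s)
    (hone : μ {x : ℚ_[p] | ‖x‖ ≤ 1} = 1)
    (ψ : AddChar ℚ_[p] ℂ)
    (hψ_triv : ∀ x : ℚ_[p], ‖x‖ ≤ 1 → ψ x = 1)
    (hψ_nontriv : ∃ x : ℚ_[p], ‖x‖ ≤ p ∧ ψ x ≠ 1)
    (a : ℚ_[p]) (ha : a ≠ 0) (u : ℝ) (hu : 1 < u) :
    (1 < ‖a‖ → ∫ x : ℚ_[p], ψ (a * x) * ((max 1 ‖x‖ : ℝ) ^ (-u) : ℝ) ∂μ = 0) ∧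
    (‖a‖ ≤ 1 → ∫ x : ℚ_[p], ψ (a * x) * ((max 1 ‖x‖ : ℝ) ^ (-u) : ℝ) ∂μ
      = ((localZeta p u)⁻¹ : ℝ) *
        ∑ k ∈ Finset.range (a.valuation.toNat + 1), (((p : ℝ) ^ (-(u - 1) * k) : ℝ) : ℂ) ) := by
  have h := padic_integral_char_max' p μ hinv hone ψ hψ_triv hψ_nontriv a ha u hu
  refine ⟨h.1, fun hale => ?_⟩
  rw [h.2 hale]
  have hz : ((localZeta p u)⁻¹ : ℝ) = 1 - (p : ℝ) ^ (-u) := by rw [localZeta, inv_inv]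
  rw [hz]
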